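/- In the polynomial ring K[a,b,c,d,e,f,g] over a field K, let I_Q = (bc − ae, cd − ag, cf − ag, de − bg, ef − bg) and J = (ae − bc, ag − cf, bg − ef, d − f). Then J is a prime ideal and J equals the colon ideal I_Q : (a·b·c·d·e·f·g). -/

import Mathlib

open MvPolynomial

-- Variables of `K[a,b,c,d,e,f,g]`, indexed by `Fin 7`:
-- `a = X 0`, `b = X 1`, `c = X 2`, `d = X 3`, `e = X 4`, `f = X 5`, `g = X 6`.

/-- The join-meet ideal `I_Q = (bc − ae, cd − ag, cf − ag, de − bg, ef − bg)` of the
lattice `Q`. -/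
noncomputable def IQ (K : Type*) [Field K] : Ideal (MvPolynomial (Fin 7) K) :=
  Ideal.span {X 1 * X 2 - X 0 * X 4, X 2 * X 3 - X 0 * X 6, X 2 * X 5 - X 0 * X 6,
    X 3 * X 4 - X 1 * X 6, X 4 * X 5 - X 1 * X 6}

/-- The ideal `J = (ae − bc, ag − cf, bg − ef, d − f)`. -/
noncomputable def JQ (K : Type*) [Field K] : Ideal (MvPolynomial (Fin 7) K) :=
  Ideal.span {X 0 * X 4 - X 1 * X 2, X 0 * X 6 - X 2 * X 5, X 1 * X 6 - X 4 * X 5,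
    X 3 - X 5}

namespace JQaux
variable (K : Type*) [Field K]

/-- The monomial `a^α b^β c^γ e^δ f^ε g^ζ`. -/
noncomputable def mon (α β γ δ ε ζ : ℕ) : MvPolynomial (Fin 7) K :=
  X 0 ^ α * X 1 ^ β * X 2 ^ γ * X 4 ^ δ * X 5 ^ ε * X 6 ^ ζ

/-- Normal form monomial for margins `(q, r, s, t)`. -/
noncomputable def nf (q r s t : ℕ) : MvPolynomial (Fin 7) K :=
  mon K (r - min q r) (s - min (q - min q r) s) (min q r) (min (q - min q r) s)
    (t - (q - min q r - min (q - min q r) s)) (q - min q r - min (q - min q r) s)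

lemma g1 : X 0 * X 4 - X 1 * X 2 ∈ JQ K :=
  Ideal.subset_span (Or.inl rfl)
lemma g2 : X 0 * X 6 - X 2 * X 5 ∈ JQ K :=
  Ideal.subset_span (Or.inr (Or.inl rfl))
lemma g3 : X 1 * X 6 - X 4 * X 5 ∈ JQ K :=
  Ideal.subset_span (Or.inr (Or.inr (Or.inl rfl)))
lemma g4 : (X 3 : MvPolynomial (Fin 7) K) - X 5 ∈ JQ K :=
  Ideal.subset_span (Or.inr (Or.inr (Or.inr rfl)))

lemma i1 : X 1 * X 2 - X 0 * X 4 ∈ IQ K :=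
  Ideal.subset_span (Or.inl rfl)
lemma i2 : X 2 * X 3 - X 0 * X 6 ∈ IQ K :=
  Ideal.subset_span (Or.inr (Or.inl rfl))
lemma i3 : X 2 * X 5 - X 0 * X 6 ∈ IQ K :=
  Ideal.subset_span (Or.inr (Or.inr (Or.inl rfl)))
lemma i5 : X 4 * X 5 - X 1 * X 6 ∈ IQ K :=
  Ideal.subset_span (Or.inr (Or.inr (Or.inr (Or.inr rfl))))

lemma mv1 (α β γ δ ε ζ : ℕ) :
    mon K (α+1) β γ (δ+1) ε ζ - mon K α (β+1) (γ+1) δ ε ζ ∈ JQ K := by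
  have h : mon K (α+1) β γ (δ+1) ε ζ - mon K α (β+1) (γ+1) δ ε ζ
      = (X 0 ^ α * X 1 ^ β * X 2 ^ γ * X 4 ^ δ * X 5 ^ ε * X 6 ^ ζ) * (X 0 * X 4 - X 1 * X 2) := by
    simp only [mon]; ring
  rw [h]; exact Ideal.mul_mem_left _ _ (g1 K)

lemma mv2 (α β γ δ ε ζ : ℕ) :
    mon K (α+1) β γ δ ε (ζ+1) - mon K α β (γ+1) δ (ε+1) ζ ∈ JQ K := by
  have h : mon K (α+1) β γ δ ε (ζ+1) - mon K α β (γ+1) δ (ε+1) ζ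
      = (X 0 ^ α * X 1 ^ β * X 2 ^ γ * X 4 ^ δ * X 5 ^ ε * X 6 ^ ζ) * (X 0 * X 6 - X 2 * X 5) := by
    simp only [mon]; ring
  rw [h]; exact Ideal.mul_mem_left _ _ (g2 K)

lemma mv3 (α β γ δ ε ζ : ℕ) :
    mon K α (β+1) γ δ ε (ζ+1) - mon K α β γ (δ+1) (ε+1) ζ ∈ JQ K := by
  have h : mon K α (β+1) γ δ ε (ζ+1) - mon K α β γ (δ+1) (ε+1) ζ
      = (X 0 ^ α * X 1 ^ β * X 2 ^ γ * X 4 ^ δ * X 5 ^ ε * X 6 ^ ζ) * (X 1 * X 6 - X 4 * X 5) := by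
    simp only [mon]; ring
  rw [h]; exact Ideal.mul_mem_left _ _ (g3 K)

lemma nf_eq (α β γ δ ε ζ : ℕ) (h1 : α = 0 ∨ δ = 0) (h2 : α = 0 ∨ ζ = 0)
    (h3 : β = 0 ∨ ζ = 0) :
    nf K (γ+δ+ζ) (α+γ) (β+δ) (ε+ζ) = mon K α β γ δ ε ζ := by
  unfold nf
  have e1 : min (γ+δ+ζ) (α+γ) = γ := by omega
  rw [e1]
  have e2 : min (γ+δ+ζ - γ) (β+δ) = δ := by omega
  rw [e2]
  have a1 : α+γ-γ = α := by omega
  have a2 : β+δ-δ = β := by omega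
  have a3 : ε+ζ-(γ+δ+ζ-γ-δ) = ε := by omega
  have a4 : γ+δ+ζ-γ-δ = ζ := by omega
  rw [a1, a2, a3, a4]

lemma reduce : ∀ (N α β γ δ ε ζ : ℕ), 3*α+β ≤ N →
    mon K α β γ δ ε ζ - nf K (γ+δ+ζ) (α+γ) (β+δ) (ε+ζ) ∈ JQ K := by
  intro N
  induction N with
  | zero =>
    intro α β γ δ ε ζ h
    have hα : α = 0 := by omega
    have hβ : β = 0 := by omega
    subst hα; subst hβ
    rw [nf_eq K _ _ _ _ _ _ (Or.inl rfl) (Or.inl rfl) (Or.inl rfl), sub_self]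
    exact Ideal.zero_mem _
  | succ n ih =>
    intro α β γ δ ε ζ h
    by_cases h1 : 0 < α ∧ 0 < δ
    · obtain ⟨a', rfl⟩ : ∃ a', α = a'+1 := ⟨α-1, by omega⟩
      obtain ⟨d', rfl⟩ : ∃ d', δ = d'+1 := ⟨δ-1, by omega⟩
      have key := mv1 K a' β γ d' ε ζ
      have ihh := ih a' (β+1) (γ+1) d' ε ζ (by omega)
      rw [show (γ+1)+d'+ζ = γ+(d'+1)+ζ by omega, show a'+(γ+1) = (a'+1)+γ by omega,
        show (β+1)+d' = β+(d'+1) by omega] at ihh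
      have hsum := Ideal.add_mem _ key ihh
      rwa [show mon K (a'+1) β γ (d'+1) ε ζ - mon K a' (β+1) (γ+1) d' ε ζ
        + (mon K a' (β+1) (γ+1) d' ε ζ - nf K (γ+(d'+1)+ζ) ((a'+1)+γ) (β+(d'+1)) (ε+ζ))
        = mon K (a'+1) β γ (d'+1) ε ζ - nf K (γ+(d'+1)+ζ) ((a'+1)+γ) (β+(d'+1)) (ε+ζ) by ring]
        at hsum
    · by_cases h2 : 0 < α ∧ 0 < ζ
      · obtain ⟨a', rfl⟩ : ∃ a', α = a'+1 := ⟨α-1, by omega⟩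
        obtain ⟨z', rfl⟩ : ∃ z', ζ = z'+1 := ⟨ζ-1, by omega⟩
        have key := mv2 K a' β γ δ ε z'
        have ihh := ih a' β (γ+1) δ (ε+1) z' (by omega)
        rw [show (γ+1)+δ+z' = γ+δ+(z'+1) by omega, show a'+(γ+1) = (a'+1)+γ by omega,
          show (ε+1)+z' = ε+(z'+1) by omega] at ihh
        have hsum := Ideal.add_mem _ key ihh
        rwa [show mon K (a'+1) β γ δ ε (z'+1) - mon K a' β (γ+1) δ (ε+1) z'
          + (mon K a' β (γ+1) δ (ε+1) z' - nf K (γ+δ+(z'+1)) ((a'+1)+γ) (β+δ) (ε+(z'+1)))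
          = mon K (a'+1) β γ δ ε (z'+1) - nf K (γ+δ+(z'+1)) ((a'+1)+γ) (β+δ) (ε+(z'+1)) by ring]
          at hsum
      · by_cases h3 : 0 < β ∧ 0 < ζ
        · obtain ⟨b', rfl⟩ : ∃ b', β = b'+1 := ⟨β-1, by omega⟩
          obtain ⟨z', rfl⟩ : ∃ z', ζ = z'+1 := ⟨ζ-1, by omega⟩
          have key := mv3 K α b' γ δ ε z'
          have ihh := ih α b' γ (δ+1) (ε+1) z' (by omega)
          rw [show γ+(δ+1)+z' = γ+δ+(z'+1) by omega, show b'+(δ+1) = (b'+1)+δ by omega,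
            show (ε+1)+z' = ε+(z'+1) by omega] at ihh
          have hsum := Ideal.add_mem _ key ihh
          rwa [show mon K α (b'+1) γ δ ε (z'+1) - mon K α b' γ (δ+1) (ε+1) z'
            + (mon K α b' γ (δ+1) (ε+1) z' - nf K (γ+δ+(z'+1)) (α+γ) ((b'+1)+δ) (ε+(z'+1)))
            = mon K α (b'+1) γ δ ε (z'+1) - nf K (γ+δ+(z'+1)) (α+γ) ((b'+1)+δ) (ε+(z'+1)) by ring]
            at hsum
        · rw [nf_eq K _ _ _ _ _ _ (by omega) (by omega) (by omega), sub_self]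
          exact Ideal.zero_mem _

noncomputable def gens : Fin 7 → MvPolynomial (Fin 5) K :=
  ![X 0 * X 2, X 0 * X 3, X 1 * X 2, X 0 * X 4, X 1 * X 3, X 0 * X 4, X 1 * X 4]

@[simp] lemma gens0 : gens K 0 = X 0 * X 2 := rfl
@[simp] lemma gens1 : gens K 1 = X 0 * X 3 := rfl
@[simp] lemma gens2 : gens K 2 = X 1 * X 2 := rfl
@[simp] lemma gens3 : gens K 3 = X 0 * X 4 := rfl
@[simp] lemma gens4 : gens K 4 = X 1 * X 3 := rfl
@[simp] lemma gens5 : gens K 5 = X 0 * X 4 := rfl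
@[simp] lemma gens6 : gens K 6 = X 1 * X 4 := rfl

noncomputable def phi : MvPolynomial (Fin 7) K →ₐ[K] MvPolynomial (Fin 5) K :=
  aeval (gens K)

noncomputable def nfp (v : Fin 5 →₀ ℕ) : MvPolynomial (Fin 7) K :=
  nf K (v 1) (v 2) (v 3) (v 4)

noncomputable def psi : MvPolynomial (Fin 5) K →ₗ[K] MvPolynomial (Fin 7) K :=
  (Finsupp.lsum K fun v => LinearMap.toSpanSingleton K _ (nfp K v)) ∘ₗ
    (AddMonoidAlgebra.coeffLinearEquiv K).toLinearMap

lemma psi_monomial (v : Fin 5 →₀ ℕ) (a : K) : psi K (monomial v a) = a • nfp K v := by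
  simp [psi, AddMonoidAlgebra.coeffLinearEquiv, monomial]

lemma hmon (P Q R S T : ℕ) (a : K) :
    C a * (X 0 : MvPolynomial (Fin 5) K) ^ P * X 1 ^ Q * X 2 ^ R * X 3 ^ S * X 4 ^ T
      = monomial (Finsupp.single 0 P + Finsupp.single 1 Q + Finsupp.single 2 R
          + Finsupp.single 3 S + Finsupp.single 4 T) a := by
  rw [C_apply, X_pow_eq_monomial, X_pow_eq_monomial, X_pow_eq_monomial,
    X_pow_eq_monomial, X_pow_eq_monomial, monomial_mul, monomial_mul, monomial_mul,
    monomial_mul, monomial_mul]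
  simp

lemma claim (P : MvPolynomial (Fin 7) K) : P - psi K (phi K P) ∈ JQ K := by
  induction P using MvPolynomial.induction_on' with
  | add p q hp hq =>
    have e : (p+q) - psi K (phi K (p+q)) = (p - psi K (phi K p)) + (q - psi K (phi K q)) := by
      rw [map_add, map_add]; ring
    rw [e]; exact Ideal.add_mem _ hp hq
  | monomial u a =>
    have A : monomial u a = C a * X 0 ^ (u 0) * X 1 ^ (u 1) * X 2 ^ (u 2) * X 3 ^ (u 3)
        * X 4 ^ (u 4) * X 5 ^ (u 5) * X 6 ^ (u 6) := by
      rw [monomial_eq, Finsupp.prod_pow, Fin.prod_univ_seven]; ring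
    have B : phi K (monomial u a)
        = C a * (X 0 : MvPolynomial (Fin 5) K) ^ (u 0 + u 1 + u 3 + u 5)
          * X 1 ^ (u 2 + u 4 + u 6) * X 2 ^ (u 0 + u 2) * X 3 ^ (u 1 + u 4)
          * X 4 ^ (u 3 + u 5 + u 6) := by
      rw [A]
      simp only [map_mul, map_pow, phi, aeval_X, aeval_C, gens0, gens1, gens2, gens3,
        gens4, gens5, gens6, algebraMap_eq]
      ring
    rw [B, hmon]
    rw [psi_monomial]
    have C5 : nfp K (Finsupp.single 0 (u 0 + u 1 + u 3 + u 5)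
        + Finsupp.single 1 (u 2 + u 4 + u 6) + Finsupp.single 2 (u 0 + u 2)
        + Finsupp.single 3 (u 1 + u 4) + Finsupp.single 4 (u 3 + u 5 + u 6))
        = nf K (u 2 + u 4 + u 6) (u 0 + u 2) (u 1 + u 4) (u 3 + u 5 + u 6) := by
      unfold nfp
      congr 1 <;> simp [Finsupp.single_apply]
    rw [C5]
    obtain ⟨c, hc⟩ := sub_dvd_pow_sub_pow (X 3 : MvPolynomial (Fin 7) K) (X 5) (u 3)
    have D : monomial u a - a • nf K (u 2 + u 4 + u 6) (u 0 + u 2) (u 1 + u 4) (u 3 + u 5 + u 6)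
        = C a * ((X 0 ^ (u 0) * X 1 ^ (u 1) * X 2 ^ (u 2) * X 4 ^ (u 4) * X 5 ^ (u 5) * X 6 ^ (u 6) * c)
              * (X 3 - X 5))
          + C a * (mon K (u 0) (u 1) (u 2) (u 4) (u 3 + u 5) (u 6)
              - nf K (u 2 + u 4 + u 6) (u 0 + u 2) (u 1 + u 4) (u 3 + u 5 + u 6)) := by
      rw [smul_eq_C_mul, A]
      rw [show (X 0 ^ (u 0) * X 1 ^ (u 1) * X 2 ^ (u 2) * X 4 ^ (u 4) * X 5 ^ (u 5) * X 6 ^ (u 6) * c)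
              * ((X 3 : MvPolynomial (Fin 7) K) - X 5)
          = (X 0 ^ (u 0) * X 1 ^ (u 1) * X 2 ^ (u 2) * X 4 ^ (u 4) * X 5 ^ (u 5) * X 6 ^ (u 6))
              * ((X 3 - X 5) * c) from by ring, ← hc]
      unfold mon
      ring
    rw [D]
    refine Ideal.add_mem _ (Ideal.mul_mem_left _ _ (Ideal.mul_mem_left _ _ (g4 K)))
      (Ideal.mul_mem_left _ _ ?_)
    exact reduce K (3 * u 0 + u 1) (u 0) (u 1) (u 2) (u 4) (u 3 + u 5) (u 6) le_rfl

lemma JQ_le_ker : JQ K ≤ RingHom.ker (phi K).toRingHom := by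
  rw [JQ, Ideal.span_le]
  intro x hx
  simp only [Set.mem_insert_iff, Set.mem_singleton_iff] at hx
  rcases hx with rfl | rfl | rfl | rfl <;>
  · simp only [SetLike.mem_coe, RingHom.mem_ker, AlgHom.toRingHom_eq_coe, RingHom.coe_coe,
      map_sub, map_mul, phi, aeval_X, gens0, gens1, gens2, gens3, gens4, gens5, gens6]
    ring

lemma JQ_eq_ker : JQ K = RingHom.ker (phi K).toRingHom := by
  refine le_antisymm (JQ_le_ker K) (fun p hp => ?_)
  have h := claim K p
  simp only [RingHom.mem_ker, AlgHom.toRingHom_eq_coe, RingHom.coe_coe] at hp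
  rwa [hp, map_zero, sub_zero] at h

lemma JQ_prime : (JQ K).IsPrime := by
  rw [JQ_eq_ker]
  exact RingHom.ker_isPrime _

lemma IQ_le_JQ : IQ K ≤ JQ K := by
  rw [IQ, Ideal.span_le]
  intro x hx
  simp only [Set.mem_insert_iff, Set.mem_singleton_iff] at hx
  rcases hx with rfl | rfl | rfl | rfl | rfl
  · rw [show (X 1 * X 2 - X 0 * X 4 : MvPolynomial (Fin 7) K)
        = -(X 0 * X 4 - X 1 * X 2) from by ring]
    exact neg_mem (g1 K)
  · rw [show (X 2 * X 3 - X 0 * X 6 : MvPolynomial (Fin 7) K)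
        = X 2 * (X 3 - X 5) - (X 0 * X 6 - X 2 * X 5) from by ring]
    exact Ideal.sub_mem _ (Ideal.mul_mem_left _ _ (g4 K)) (g2 K)
  · rw [show (X 2 * X 5 - X 0 * X 6 : MvPolynomial (Fin 7) K)
        = -(X 0 * X 6 - X 2 * X 5) from by ring]
    exact neg_mem (g2 K)
  · rw [show (X 3 * X 4 - X 1 * X 6 : MvPolynomial (Fin 7) K)
        = X 4 * (X 3 - X 5) - (X 1 * X 6 - X 4 * X 5) from by ring]
    exact Ideal.sub_mem _ (Ideal.mul_mem_left _ _ (g4 K)) (g3 K)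
  · rw [show (X 4 * X 5 - X 1 * X 6 : MvPolynomial (Fin 7) K)
        = -(X 1 * X 6 - X 4 * X 5) from by ring]
    exact neg_mem (g3 K)

end JQaux

namespace JQaux
variable (K : Type*) [Field K]

lemma m_not_mem : (X 0 * X 1 * X 2 * X 3 * X 4 * X 5 * X 6 : MvPolynomial (Fin 7) K) ∉ JQ K := by
  intro hm
  have h0 := JQ_le_ker K hm
  simp only [RingHom.mem_ker, AlgHom.toRingHom_eq_coe, RingHom.coe_coe, map_mul, phi,
    aeval_X, gens0, gens1, gens2, gens3, gens4, gens5, gens6] at h0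
  have hne : ((X 0 * X 2) * (X 0 * X 3) * (X 1 * X 2) * (X 0 * X 4) * (X 1 * X 3) * (X 0 * X 4)
      * (X 1 * X 4) : MvPolynomial (Fin 5) K) ≠ 0 := by
    have hx : ∀ i j : Fin 5, (X i * X j : MvPolynomial (Fin 5) K) ≠ 0 :=
      fun i j => mul_ne_zero (X_ne_zero i) (X_ne_zero j)
    exact mul_ne_zero (mul_ne_zero (mul_ne_zero (mul_ne_zero (mul_ne_zero
      (mul_ne_zero (hx 0 2) (hx 0 3)) (hx 1 2)) (hx 0 4)) (hx 1 3)) (hx 0 4)) (hx 1 4)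
  exact hne h0

lemma JQ_le_colon : JQ K ≤ Submodule.colon (IQ K)
    (Ideal.span {(X 0 * X 1 * X 2 * X 3 * X 4 * X 5 * X 6 : MvPolynomial (Fin 7) K)}) := by
  rw [JQ, Ideal.span_le]
  intro x hx
  simp only [Set.mem_insert_iff, Set.mem_singleton_iff] at hx
  rw [SetLike.mem_coe, Ideal.mem_colon_span_singleton]
  rcases hx with rfl | rfl | rfl | rfl
  · rw [show (X 0 * X 4 - X 1 * X 2) * (X 0 * X 1 * X 2 * X 3 * X 4 * X 5 * X 6)
        = (-(X 0 * X 1 * X 2 * X 3 * X 4 * X 5 * X 6)) * (X 1 * X 2 - X 0 * X 4 :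
          MvPolynomial (Fin 7) K) from by ring]
    exact Ideal.mul_mem_left _ _ (i1 K)
  · rw [show (X 0 * X 6 - X 2 * X 5) * (X 0 * X 1 * X 2 * X 3 * X 4 * X 5 * X 6)
        = (-(X 0 * X 1 * X 2 * X 3 * X 4 * X 5 * X 6)) * (X 2 * X 5 - X 0 * X 6 :
          MvPolynomial (Fin 7) K) from by ring]
    exact Ideal.mul_mem_left _ _ (i3 K)
  · rw [show (X 1 * X 6 - X 4 * X 5) * (X 0 * X 1 * X 2 * X 3 * X 4 * X 5 * X 6)
        = (-(X 0 * X 1 * X 2 * X 3 * X 4 * X 5 * X 6)) * (X 4 * X 5 - X 1 * X 6 :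
          MvPolynomial (Fin 7) K) from by ring]
    exact Ideal.mul_mem_left _ _ (i5 K)
  · rw [show (X 3 - X 5) * (X 0 * X 1 * X 2 * X 3 * X 4 * X 5 * X 6)
        = (X 0 * X 1 * X 3 * X 4 * X 5 * X 6) * (X 2 * X 3 - X 0 * X 6)
          - (X 0 * X 1 * X 3 * X 4 * X 5 * X 6) * (X 2 * X 5 - X 0 * X 6 :
          MvPolynomial (Fin 7) K) from by ring]
    exact Ideal.sub_mem _ (Ideal.mul_mem_left _ _ (i2 K)) (Ideal.mul_mem_left _ _ (i3 K))

lemma colon_le_JQ : Submodule.colon (IQ K)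
    (Ideal.span {(X 0 * X 1 * X 2 * X 3 * X 4 * X 5 * X 6 : MvPolynomial (Fin 7) K)})
    ≤ JQ K := by
  intro p hp
  rw [Ideal.mem_colon_span_singleton] at hp
  have hpm : p * (X 0 * X 1 * X 2 * X 3 * X 4 * X 5 * X 6) ∈ JQ K := IQ_le_JQ K hp
  rcases (JQ_prime K).mem_or_mem hpm with h | h
  · exact h
  · exact absurd h (m_not_mem K)

end JQaux

/-- **Example.** `J` is a prime ideal and `J = I_Q : (a·b·c·d·e·f·g)`. -/
theorem JQ_isPrime_and_eq_colon
    (K : Type*) [Field K] :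
    (JQ K).IsPrime ∧
      JQ K = Submodule.colon (IQ K)
        (Ideal.span {(X 0 * X 1 * X 2 * X 3 * X 4 * X 5 * X 6 : MvPolynomial (Fin 7) K)}) := by
  exact ⟨JQaux.JQ_prime K, le_antisymm (JQaux.JQ_le_colon K) (JQaux.colon_le_JQ K)⟩
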